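/- Let f(z) = z + a₂z² + a₃z³ + ⋯ be bi-univalent on the unit disk with inverse extension g, and suppose Re(f'(z)) > β and Re(g'(w)) > β on 𝕌 for some β with 0 ≤ β < 1/3. Then |a₂| ≤ √(2(1−β)/3) and |a₃| ≤ 2(1−β)/3. -/

import Mathlib

open Metric Complex intervalIntegral Set MeasureTheory


private lemma myIntegral_conj {f : ℝ → ℂ} {a b : ℝ} :
    ∫ x in a..b, (starRingEnd ℂ) (f x) = (starRingEnd ℂ) (∫ x in a..b, f x) := by
  simp only [intervalIntegral, integral_conj, map_sub]

private lemma carath_core {p : ℂ → ℂ} (hp : AnalyticOnNhd ℂ p (ball (0:ℂ) 1))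
    (hre : ∀ z ∈ ball (0:ℂ) 1, 0 ≤ (p z).re) (n : ℕ) (hn : n ≠ 0) {r : ℝ}
    (hr0 : 0 < r) (hr1 : r < 1) :
    ‖iteratedDeriv n p 0‖ * r ^ n ≤ 2 * n.factorial * (p 0).re := by
  have hmem : ∀ θ : ℝ, circleMap 0 r θ ∈ ball (0:ℂ) 1 := by
    intro θ
    simp [mem_ball_zero_iff, norm_circleMap_zero, abs_of_pos hr0, hr1]
  have hpc : Continuous fun θ : ℝ => p (circleMap 0 r θ) :=
    hp.continuousOn.comp_continuous (continuous_circleMap 0 r) hmem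
  have hz : ∀ θ : ℝ, circleMap 0 r θ ≠ 0 := fun θ => circleMap_ne_center hr0.ne'
  have hzpow : ∀ (k : ℕ) (θ : ℝ), circleMap 0 r θ ^ k = (r:ℂ)^k * Complex.exp ((k*θ)*Complex.I) := by
    intro k θ
    rw [circleMap_zero, mul_pow, ← Complex.exp_nat_mul]
    ring_nf
  -- power series
  set R : NNReal := r.toNNReal with hR
  have hRr : (R : ℝ) = r := Real.coe_toNNReal _ hr0.le
  have hd : DifferentiableOn ℂ p (closedBall (0:ℂ) R) := by
    rw [hRr]; exact hp.differentiableOn.mono (closedBall_subset_ball hr1)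
  have hps : HasFPowerSeriesOnBall p (cauchyPowerSeries p 0 R) 0 R :=
    hd.hasFPowerSeriesOnBall (by simpa [hR] using hr0)
  have hcoeff : ∀ k : ℕ, iteratedDeriv k p 0
      = (k.factorial : ℂ) * (cauchyPowerSeries p 0 R k fun _ => 1) := by
    intro k
    rw [iteratedDeriv_eq_iteratedFDeriv, ← hps.factorial_smul 1 k]
    simp [nsmul_eq_mul]
  -- C1 : coefficient integral formula
  have C1 : ∀ k : ℕ, (cauchyPowerSeries p 0 R k fun _ => 1)
      = (((2*Real.pi) : ℝ) : ℂ)⁻¹ * ((r : ℂ) ^ k)⁻¹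
        * ∫ θ in (0:ℝ)..2*Real.pi, Complex.exp (-(k*θ)*Complex.I) * p (circleMap 0 r θ) := by
    intro k
    rw [cauchyPowerSeries_apply]
    have : (∮ z in C(0, (R:ℝ)), ((1:ℂ) / (z - 0)) ^ k • (z - 0)⁻¹ • p z)
        = Complex.I * (((r:ℂ) ^ k)⁻¹
          * ∫ θ in (0:ℝ)..2*Real.pi, Complex.exp (-(k*θ)*Complex.I) * p (circleMap 0 r θ)) := by
      rw [hRr, circleIntegral]
      have hcongr : EqOn
          (fun θ : ℝ => deriv (circleMap 0 r) θ • (((1:ℂ) / (circleMap 0 r θ - 0)) ^ k • (circleMap 0 r θ - 0)⁻¹ • p (circleMap 0 r θ)))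
          (fun θ : ℝ => (Complex.I * ((r:ℂ)^k)⁻¹) * (Complex.exp (-(k*θ)*Complex.I) * p (circleMap 0 r θ)))
          (uIcc (0:ℝ) (2*Real.pi)) := by
        intro θ _
        have h1 : (circleMap 0 r θ)⁻¹ ^ k = ((r:ℂ)^k)⁻¹ * Complex.exp (-(k*θ)*Complex.I) := by
          rw [inv_pow, hzpow k θ, mul_inv, ← Complex.exp_neg, neg_mul]
        simp only [deriv_circleMap, smul_eq_mul, sub_zero, one_div]
        rw [h1]
        generalize p (circleMap 0 r θ) = P
        generalize Complex.exp (-((k:ℂ) * (θ:ℂ)) * Complex.I) = E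
        field_simp [hz θ]
      rw [intervalIntegral.integral_congr hcongr, intervalIntegral.integral_const_mul, mul_assoc]
    rw [this, smul_eq_mul]
    have hpi : (Real.pi:ℂ) ≠ 0 := by exact_mod_cast Real.pi_ne_zero
    have hI : (2 * (Real.pi:ℂ) * Complex.I)⁻¹ * Complex.I = (((2*Real.pi):ℝ):ℂ)⁻¹ := by
      push_cast
      rw [mul_inv, inv_I]
      field_simp
      simp [Complex.I_sq]
    push_cast
    rw [← mul_assoc, ← mul_assoc, hI]
    push_cast
    ring
  -- mean value
  have h2pi : ((2*Real.pi : ℝ) : ℂ) ≠ 0 := by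
    exact_mod_cast Real.two_pi_pos.ne'
  have C2 : (∫ θ in (0:ℝ)..2*Real.pi, p (circleMap 0 r θ)) = ((2*Real.pi : ℝ) : ℂ) * p 0 := by
    have h0 := (hcoeff 0).symm
    rw [C1 0] at h0
    simp only [iteratedDeriv_zero, Nat.factorial_zero, Nat.cast_one, one_mul, pow_zero, inv_one,
      Nat.cast_zero, zero_mul, neg_zero, Complex.exp_zero, mul_one] at h0
    rw [← h0, ← mul_assoc, mul_inv_cancel₀ h2pi, one_mul]
  -- vanishing of positive-frequency integrals
  have C3 : ∀ k : ℕ, k ≠ 0 → (∫ θ in (0:ℝ)..2*Real.pi,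
      Complex.exp (((k:ℂ)*θ)*Complex.I) * p (circleMap 0 r θ)) = 0 := by
    intro k hk
    obtain ⟨m, rfl⟩ := Nat.exists_eq_succ_of_ne_zero hk
    have h0 : (∮ z in C(0, r), z ^ m * p z) = 0 := by
      refine Complex.circleIntegral_eq_zero_of_differentiable_on_off_countable hr0.le
        countable_empty ?_ ?_
      · exact ((continuous_pow m).continuousOn).mul
          (hp.continuousOn.mono (closedBall_subset_ball hr1))
      · intro z hz'
        exact (differentiableAt_pow m).mul (hp z (ball_subset_ball hr1.le hz'.1)).differentiableAt
    rw [circleIntegral] at h0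
    have hcongr : EqOn
        (fun θ : ℝ => deriv (circleMap 0 r) θ • (circleMap 0 r θ ^ m * p (circleMap 0 r θ)))
        (fun θ : ℝ => (Complex.I * (r:ℂ)^(m+1)) *
          (Complex.exp ((((m+1:ℕ):ℂ))*θ*Complex.I) * p (circleMap 0 r θ)))
        (uIcc (0:ℝ) (2*Real.pi)) := by
      intro θ _
      simp only [deriv_circleMap, smul_eq_mul]
      have : circleMap 0 r θ * Complex.I * (circleMap 0 r θ ^ m * p (circleMap 0 r θ))
          = Complex.I * (circleMap 0 r θ ^ (m+1) * p (circleMap 0 r θ)) := by ring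
      rw [this, hzpow (m+1) θ]
      push_cast
      ring
    rw [intervalIntegral.integral_congr hcongr, intervalIntegral.integral_const_mul] at h0
    have hne : (Complex.I * (r:ℂ)^(m+1)) ≠ 0 := by
      simp [Complex.I_ne_zero, Complex.ofReal_ne_zero, hr0.ne', pow_ne_zero]
    have := (mul_eq_zero.mp h0).resolve_left hne
    convert this using 3 with θ
  -- conjugate vanishing
  have C4 : (∫ θ in (0:ℝ)..2*Real.pi,
      Complex.exp (-((n:ℂ)*θ)*Complex.I) * (starRingEnd ℂ) (p (circleMap 0 r θ))) = 0 := by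
    have heq : (fun θ : ℝ => Complex.exp (-((n:ℂ)*θ)*Complex.I)
          * (starRingEnd ℂ) (p (circleMap 0 r θ)))
        = fun θ : ℝ => (starRingEnd ℂ)
            (Complex.exp (((n:ℂ)*θ)*Complex.I) * p (circleMap 0 r θ)) := by
      funext θ
      rw [map_mul, ← Complex.exp_conj]
      congr 2
      simp [map_mul, Complex.conj_I, Complex.conj_ofReal]
    rw [heq, myIntegral_conj, C3 n hn, map_zero]
  -- integrability facts
  have hecont : Continuous fun θ:ℝ => Complex.exp (-((n:ℂ)*θ)*Complex.I) := by
    apply Complex.continuous_exp.comp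
    fun_prop
  have hint1 : IntervalIntegrable (fun θ:ℝ => Complex.exp (-((n:ℂ)*θ)*Complex.I)
      * p (circleMap 0 r θ)) volume 0 (2*Real.pi) :=
    (hecont.mul hpc).intervalIntegrable _ _
  have hint2 : IntervalIntegrable (fun θ:ℝ => Complex.exp (-((n:ℂ)*θ)*Complex.I)
      * (starRingEnd ℂ) (p (circleMap 0 r θ))) volume 0 (2*Real.pi) :=
    (hecont.mul (Complex.continuous_conj.comp hpc)).intervalIntegrable _ _
  -- replace p by twice its real part
  have hadd : (∫ θ in (0:ℝ)..2*Real.pi, Complex.exp (-((n:ℂ)*θ)*Complex.I) * p (circleMap 0 r θ))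
      = ∫ θ in (0:ℝ)..2*Real.pi, Complex.exp (-((n:ℂ)*θ)*Complex.I)
          * (2 * (((p (circleMap 0 r θ)).re : ℝ) : ℂ)) := by
    have hsum := intervalIntegral.integral_add hint1 hint2
    rw [C4, add_zero] at hsum
    rw [← hsum]
    refine intervalIntegral.integral_congr fun θ _ => ?_
    rw [← mul_add, Complex.add_conj]
    push_cast
    ring
  -- real-part integral
  have hintp : IntervalIntegrable (fun θ:ℝ => p (circleMap 0 r θ)) volume 0 (2*Real.pi) :=
    hpc.intervalIntegrable _ _
  have hintcp : IntervalIntegrable (fun θ:ℝ => (starRingEnd ℂ) (p (circleMap 0 r θ)))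
      volume 0 (2*Real.pi) := (Complex.continuous_conj.comp hpc).intervalIntegrable _ _
  have hreint : (∫ θ in (0:ℝ)..2*Real.pi, (p (circleMap 0 r θ)).re)
      = 2*Real.pi * (p 0).re := by
    have h1 : (∫ θ in (0:ℝ)..2*Real.pi, (((p (circleMap 0 r θ)).re : ℝ) : ℂ))
        = ((2*Real.pi * (p 0).re : ℝ) : ℂ) := by
      have heq : (fun θ:ℝ => (((p (circleMap 0 r θ)).re : ℝ) : ℂ))
          = fun θ:ℝ => (2:ℂ)⁻¹ * (p (circleMap 0 r θ)
              + (starRingEnd ℂ) (p (circleMap 0 r θ))) := by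
        funext θ
        rw [Complex.add_conj]
        push_cast
        ring
      rw [heq, intervalIntegral.integral_const_mul,
        intervalIntegral.integral_add hintp hintcp, myIntegral_conj, C2, map_mul,
        Complex.conj_ofReal, ← mul_add, Complex.add_conj]
      push_cast
      ring
    rw [intervalIntegral.integral_ofReal] at h1
    exact_mod_cast h1
  have hp0 : 0 ≤ (p 0).re := hre 0 (mem_ball_self one_pos)
  -- norm bound on the integral
  have hnorm : ‖∫ θ in (0:ℝ)..2*Real.pi, Complex.exp (-((n:ℂ)*θ)*Complex.I)
        * (2 * (((p (circleMap 0 r θ)).re : ℝ) : ℂ))‖ ≤ 2 * (2*Real.pi) * (p 0).re := by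
    have hb := intervalIntegral.norm_integral_le_integral_norm
      (f := fun θ:ℝ => Complex.exp (-((n:ℂ)*θ)*Complex.I)
        * (2 * (((p (circleMap 0 r θ)).re : ℝ) : ℂ))) (a := 0) (b := 2*Real.pi) (μ := volume)
      Real.two_pi_pos.le
    refine hb.trans ?_
    have heq : (∫ θ in (0:ℝ)..2*Real.pi, ‖Complex.exp (-((n:ℂ)*θ)*Complex.I)
        * (2 * (((p (circleMap 0 r θ)).re : ℝ) : ℂ))‖)
        = ∫ θ in (0:ℝ)..2*Real.pi, 2 * (p (circleMap 0 r θ)).re := by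
      refine intervalIntegral.integral_congr fun θ _ => ?_
      have habs : ‖Complex.exp (-((n:ℂ)*θ)*Complex.I)‖ = 1 := by
        rw [Complex.norm_exp]
        norm_num
      rw [norm_mul, habs, one_mul, norm_mul]
      simp [Complex.norm_real, _root_.abs_of_nonneg (hre _ (hmem θ)), hre _ (hmem θ)]
    rw [heq, intervalIntegral.integral_const_mul, hreint]
    ring_nf
    exact le_refl _
  -- assemble
  rw [hcoeff n, C1 n, hadd]
  have hrn : (0:ℝ) < r^n := pow_pos hr0 n
  set J := ∫ θ in (0:ℝ)..2*Real.pi, Complex.exp (-((n:ℂ)*θ)*Complex.I)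
      * (2 * (((p (circleMap 0 r θ)).re : ℝ) : ℂ)) with hJ
  have hnn : ‖(n.factorial:ℂ) * ((((2*Real.pi : ℝ) : ℂ))⁻¹ * ((r:ℂ)^n)⁻¹ * J)‖
      = (n.factorial:ℝ) * ((2*Real.pi)⁻¹ * ((r^n)⁻¹ * ‖J‖)) := by
    simp [norm_mul, norm_inv, norm_pow, Complex.norm_real, Complex.norm_natCast,
      abs_of_pos Real.pi_pos, abs_of_pos hr0, abs_of_pos Real.two_pi_pos, mul_assoc]
  rw [hnn]
  have hJle : ‖J‖ ≤ 2 * (2*Real.pi) * (p 0).re := hnorm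
  calc (n.factorial:ℝ) * ((2*Real.pi)⁻¹ * ((r^n)⁻¹ * ‖J‖)) * r^n
      = (n.factorial:ℝ) * (2*Real.pi)⁻¹ * ‖J‖ := by
        field_simp
    _ ≤ (n.factorial:ℝ) * (2*Real.pi)⁻¹ * (2 * (2*Real.pi) * (p 0).re) := by
        apply mul_le_mul_of_nonneg_left hJle
        positivity
    _ = 2 * n.factorial * (p 0).re := by
        field_simp

private lemma carath {p : ℂ → ℂ} (hp : AnalyticOnNhd ℂ p (ball (0:ℂ) 1))
    (hre : ∀ z ∈ ball (0:ℂ) 1, 0 ≤ (p z).re) {n : ℕ} (hn : n ≠ 0) :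
    ‖iteratedDeriv n p 0‖ ≤ 2 * n.factorial * (p 0).re := by
  have key : ∀ r ∈ Ioo (0:ℝ) 1, ‖iteratedDeriv n p 0‖ * r ^ n ≤ 2 * n.factorial * (p 0).re :=
    fun r hr => carath_core hp hre n hn hr.1 hr.2
  have h1 : Filter.Tendsto (fun r : ℝ => ‖iteratedDeriv n p 0‖ * r ^ n)
      (nhdsWithin 1 (Iio 1)) (nhds (‖iteratedDeriv n p 0‖ * 1 ^ n)) :=
    ((continuous_const.mul (continuous_pow n)).tendsto 1).mono_left nhdsWithin_le_nhds
  have h2 : ∀ᶠ r in nhdsWithin (1:ℝ) (Iio 1),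
      ‖iteratedDeriv n p 0‖ * r ^ n ≤ 2 * n.factorial * (p 0).re := by
    filter_upwards [Ioo_mem_nhdsLT (by norm_num : (0:ℝ) < 1)] using key
  simpa using le_of_tendsto h1 h2

private lemma inv_derivs {f g : ℂ → ℂ}
    (hf : AnalyticOnNhd ℂ f (ball (0:ℂ) 1)) (hf0 : f 0 = 0) (hf1 : deriv f 0 = 1)
    (hg : AnalyticOnNhd ℂ g (ball (0:ℂ) 1))
    (hgf : ∀ᶠ z in nhds (0 : ℂ), g (f z) = z) :
    deriv g 0 = 1 ∧ iteratedDeriv 2 g 0 = - iteratedDeriv 2 f 0 ∧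
      iteratedDeriv 3 g 0 = 3 * (iteratedDeriv 2 f 0)^2 - iteratedDeriv 3 f 0 := by
  have h0mem : (0:ℂ) ∈ ball (0:ℂ) 1 := mem_ball_self one_pos
  have ev0 : ∀ᶠ z in nhds (0:ℂ), z ∈ ball (0:ℂ) 1 := ball_mem_nhds 0 one_pos
  have ev : ∀ᶠ z in nhds (0:ℂ), f z ∈ ball (0:ℂ) 1 := by
    have : ContinuousAt f 0 := (hf 0 h0mem).continuousAt
    apply this.eventually_mem
    rw [hf0]
    exact ball_mem_nhds 0 one_pos
  have hgfe : (fun z => g (f z)) =ᶠ[nhds (0:ℂ)] (fun z => z) := hgf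
  -- first derivative identity
  have hcomp : ∀ᶠ z in nhds (0:ℂ), deriv (fun z => g (f z)) z = deriv g (f z) * deriv f z := by
    filter_upwards [ev, ev0] with z h1 h2
    exact deriv_comp z (hg _ h1).differentiableAt (hf _ h2).differentiableAt
  have A : (fun z => deriv g (f z) * deriv f z) =ᶠ[nhds (0:ℂ)] (fun _ => (1:ℂ)) := by
    filter_upwards [hcomp, hgfe.deriv] with z h1 h2
    rw [← h1, h2, deriv_id'']
  have hA0 : deriv g 0 = 1 := by
    have := A.eq_of_nhds
    simp only [hf0, hf1, mul_one] at this
    exact this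
  -- second derivative identity
  have hBpt : ∀ᶠ z in nhds (0:ℂ), deriv (fun z => deriv g (f z) * deriv f z) z
      = deriv (deriv g) (f z) * deriv f z * deriv f z + deriv g (f z) * deriv (deriv f) z := by
    filter_upwards [ev, ev0] with z h1 h2
    have d1 : DifferentiableAt ℂ (fun z => deriv g (f z)) z :=
      (hg.deriv (f z) h1).differentiableAt.comp z (hf z h2).differentiableAt
    have d2 : DifferentiableAt ℂ (deriv f) z := (hf.deriv z h2).differentiableAt
    have hc := deriv_comp z (hg.deriv (f z) h1).differentiableAt (hf z h2).differentiableAt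
    simp only [Function.comp_def] at hc
    rw [deriv_fun_mul d1 d2, hc]
  have B : (fun z => deriv (deriv g) (f z) * deriv f z * deriv f z
      + deriv g (f z) * deriv (deriv f) z) =ᶠ[nhds (0:ℂ)] (fun _ => (0:ℂ)) := by
    filter_upwards [hBpt, A.deriv] with z h1 h2
    rw [← h1, h2, deriv_const]
  have hB0 : deriv (deriv g) 0 = - deriv (deriv f) 0 := by
    have := B.eq_of_nhds
    simp only [hf0, hf1, hA0, mul_one, one_mul] at this
    linear_combination this
  -- third derivative identity
  have hCpt : ∀ᶠ z in nhds (0:ℂ), deriv (fun z => deriv (deriv g) (f z) * deriv f z * deriv f z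
      + deriv g (f z) * deriv (deriv f) z) z
      = deriv (deriv (deriv g)) (f z) * deriv f z * deriv f z * deriv f z
        + 3 * (deriv (deriv g) (f z) * deriv f z * deriv (deriv f) z)
        + deriv g (f z) * deriv (deriv (deriv f)) z := by
    filter_upwards [ev, ev0] with z h1 h2
    have df1 : DifferentiableAt ℂ f z := (hf z h2).differentiableAt
    have df2 : DifferentiableAt ℂ (deriv f) z := (hf.deriv z h2).differentiableAt
    have df3 : DifferentiableAt ℂ (deriv (deriv f)) z := (hf.deriv.deriv z h2).differentiableAt
    have dg1 : DifferentiableAt ℂ (deriv g) (f z) := (hg.deriv (f z) h1).differentiableAt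
    have dg2 : DifferentiableAt ℂ (deriv (deriv g)) (f z) := (hg.deriv.deriv (f z) h1).differentiableAt
    have c1 : DifferentiableAt ℂ (fun z => deriv g (f z)) z := dg1.comp z df1
    have c2 : DifferentiableAt ℂ (fun z => deriv (deriv g) (f z)) z := dg2.comp z df1
    have hc1 := deriv_comp z dg1 df1
    have hc2 := deriv_comp z dg2 df1
    simp only [Function.comp_def] at hc1 hc2
    rw [deriv_fun_add ((c2.fun_mul df2).fun_mul df2) (c1.fun_mul df3),
      deriv_fun_mul (c2.fun_mul df2) df2, deriv_fun_mul c2 df2,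
      deriv_fun_mul c1 df3, hc2, hc1]
    ring
  have C : (fun z => deriv (deriv (deriv g)) (f z) * deriv f z * deriv f z * deriv f z
        + 3 * (deriv (deriv g) (f z) * deriv f z * deriv (deriv f) z)
        + deriv g (f z) * deriv (deriv (deriv f)) z)
      =ᶠ[nhds (0:ℂ)] (fun _ => (0:ℂ)) := by
    filter_upwards [hCpt, B.deriv] with z h1 h2
    rw [← h1, h2, deriv_const]
  have hC0 : deriv (deriv (deriv g)) 0
      = 3 * (deriv (deriv f) 0)^2 - deriv (deriv (deriv f)) 0 := by
    have h := C.eq_of_nhds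
    simp only [hf0, hf1, hA0, mul_one, one_mul] at h
    rw [hB0] at h
    linear_combination h
  have it2 : ∀ h : ℂ → ℂ, iteratedDeriv 2 h 0 = deriv (deriv h) 0 := by
    intro h
    rw [show (2:ℕ) = 1+1 from rfl, iteratedDeriv_succ, iteratedDeriv_one]
  have it3 : ∀ h : ℂ → ℂ, iteratedDeriv 3 h 0 = deriv (deriv (deriv h)) 0 := by
    intro h
    have : iteratedDeriv 3 h = deriv (deriv (deriv h)) := by
      rw [show (3:ℕ) = 1+1+1 from rfl, iteratedDeriv_succ, iteratedDeriv_succ, iteratedDeriv_one]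
    rw [this]
  refine ⟨hA0, ?_, ?_⟩
  · rw [it2, it2]
    exact hB0
  · rw [it3, it3, it2]
    exact hC0

private lemma iter_helper {F : ℂ → ℂ} (hF : AnalyticOnNhd ℂ F (ball (0:ℂ) 1)) (c b : ℂ) :
    iteratedDeriv 1 (fun z => c * (deriv F z - b)) 0 = c * iteratedDeriv 2 F 0 ∧
    iteratedDeriv 2 (fun z => c * (deriv F z - b)) 0 = c * iteratedDeriv 3 F 0 := by
  have it2 : ∀ h : ℂ → ℂ, iteratedDeriv 2 h = deriv (deriv h) := by
    intro h
    rw [show (2:ℕ) = 1+1 from rfl, iteratedDeriv_succ, iteratedDeriv_one]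
  have it3 : ∀ h : ℂ → ℂ, iteratedDeriv 3 h = deriv (deriv (deriv h)) := by
    intro h
    rw [show (3:ℕ) = 1+1+1 from rfl, iteratedDeriv_succ, iteratedDeriv_succ, iteratedDeriv_one]
  have hev : deriv (fun z => c * (deriv F z - b)) =ᶠ[nhds (0:ℂ)]
      fun z => c * deriv (deriv F) z := by
    filter_upwards [ball_mem_nhds (0:ℂ) one_pos] with z hz
    rw [deriv_const_mul _ ((hF.deriv z hz).differentiableAt.sub_const b), deriv_sub_const]
  constructor
  · rw [iteratedDeriv_one, it2 F]
    exact hev.eq_of_nhds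
  · rw [it2, it3 F]
    rw [hev.deriv_eq,
      deriv_const_mul _ (hF.deriv.deriv 0 (mem_ball_self one_pos)).differentiableAt]

/-- If `f` is bi-univalent with inverse extension `g`, `Re f' > β` and `Re g' > β` on
the unit disk with `0 ≤ β < 1/3`, then `|a₂| ≤ √(2(1-β)/3)` and `|a₃| ≤ 2(1-β)/3`. -/
theorem a2_a3_bound_re_deriv_small_beta
    (f g : ℂ → ℂ)
    (hf : AnalyticOnNhd ℂ f (ball (0 : ℂ) 1)) (hfinj : Set.InjOn f (ball (0 : ℂ) 1))
    (hf0 : f 0 = 0) (hf1 : deriv f 0 = 1)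
    (hg : AnalyticOnNhd ℂ g (ball (0 : ℂ) 1)) (hginj : Set.InjOn g (ball (0 : ℂ) 1))
    (hgf : ∀ᶠ z in nhds (0 : ℂ), g (f z) = z)
    (beta : ℝ) (hbeta : 0 ≤ beta ∧ beta < 1/3)
    (hfre : ∀ z ∈ ball (0 : ℂ) 1, beta < (deriv f z).re)
    (hgre : ∀ w ∈ ball (0 : ℂ) 1, beta < (deriv g w).re)
    (a₂ a₃ : ℂ) (ha₂ : a₂ = iteratedDeriv 2 f 0 / 2) (ha₃ : a₃ = iteratedDeriv 3 f 0 / 6) :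
    ‖a₂‖ ≤ Real.sqrt (2 * (1 - beta) / 3) ∧ ‖a₃‖ ≤ 2 * (1 - beta) / 3 := by
  obtain ⟨hb0, hb13⟩ := hbeta
  have hb1 : beta < 1 := lt_trans hb13 (by norm_num)
  have hpos : (0:ℝ) < 1 - beta := by linarith
  have hne : ((1 - beta : ℝ) : ℂ) ≠ 0 := by exact_mod_cast hpos.ne'
  obtain ⟨hg1, hg2, hg3⟩ := inv_derivs hf hf0 hf1 hg hgf
  set c : ℂ := ((1 - beta : ℝ) : ℂ)⁻¹ with hc
  have hcnorm : ‖c‖ = (1 - beta)⁻¹ := by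
    rw [hc, norm_inv, Complex.norm_real, Real.norm_eq_abs, abs_of_pos hpos]
  -- generic bound for a function with Re deriv > beta
  have main : ∀ F : ℂ → ℂ, AnalyticOnNhd ℂ F (ball (0:ℂ) 1) → deriv F 0 = 1 →
      (∀ z ∈ ball (0:ℂ) 1, beta < (deriv F z).re) →
      ‖iteratedDeriv 2 F 0‖ ≤ 2 * (1 - beta) ∧ ‖iteratedDeriv 3 F 0‖ ≤ 4 * (1 - beta) := by
    intro F hFa hF1 hFre
    set P : ℂ → ℂ := fun z => c * (deriv F z - (beta:ℝ)) with hP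
    have hPa : AnalyticOnNhd ℂ P (ball (0:ℂ) 1) := fun z hz =>
      analyticAt_const.mul ((hFa.deriv z hz).sub analyticAt_const)
    have hPre : ∀ z ∈ ball (0:ℂ) 1, 0 ≤ (P z).re := by
      intro z hz
      have hre : (P z).re = (1 - beta)⁻¹ * ((deriv F z).re - beta) := by
        rw [hP]
        simp only [hc, ← Complex.ofReal_inv]
        rw [Complex.re_ofReal_mul, Complex.sub_re, Complex.ofReal_re]
      rw [hre]
      exact mul_nonneg (inv_nonneg.2 hpos.le) (by linarith [hFre z hz])
    have hP0 : P 0 = 1 := by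
      simp only [hP, hF1]
      rw [show (1 : ℂ) - ((beta:ℝ):ℂ) = ((1 - beta : ℝ) : ℂ) by push_cast; ring, hc,
        inv_mul_cancel₀ hne]
    obtain ⟨i1, i2⟩ := iter_helper hFa c ((beta:ℝ):ℂ)
    have b2 := carath hPa hPre (n := 1) one_ne_zero
    have b3 := carath hPa hPre (n := 2) two_ne_zero
    rw [i1, hP0, norm_mul, hcnorm] at b2
    rw [i2, hP0, norm_mul, hcnorm] at b3
    norm_num [Complex.one_re] at b2 b3
    constructor
    · have h := mul_le_mul_of_nonneg_left b2 hpos.le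
      rw [← mul_assoc, mul_inv_cancel₀ hpos.ne', one_mul] at h
      linarith
    · have h := mul_le_mul_of_nonneg_left b3 hpos.le
      rw [← mul_assoc, mul_inv_cancel₀ hpos.ne', one_mul] at h
      linarith
  obtain ⟨bf2, bf3⟩ := main f hf hf1 hfre
  obtain ⟨-, bg3⟩ := main g hg hg1 hgre
  have ha3 : ‖a₃‖ ≤ 2 * (1 - beta) / 3 := by
    rw [ha₃, norm_div]
    have h6 : ‖(6:ℂ)‖ = 6 := by norm_num
    rw [h6]
    linarith
  refine ⟨?_, ha3⟩
  have key : ‖3 * (iteratedDeriv 2 f 0)^2‖ ≤ 8 * (1 - beta) := by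
    have heq : 3 * (iteratedDeriv 2 f 0)^2 = iteratedDeriv 3 g 0 + iteratedDeriv 3 f 0 := by
      rw [hg3]; ring
    rw [heq]
    exact (norm_add_le _ _).trans (by linarith)
  have h2a : iteratedDeriv 2 f 0 = 2 * a₂ := by rw [ha₂]; ring
  have e : ‖3 * (iteratedDeriv 2 f 0)^2‖ = 12 * ‖a₂‖^2 := by
    rw [h2a, show (3:ℂ) * (2*a₂)^2 = 12 * a₂^2 by ring, norm_mul, norm_pow]
    norm_num
  have hn2 : ‖a₂‖^2 ≤ 2 * (1 - beta) / 3 := by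
    rw [e] at key
    linarith
  have := Real.sqrt_le_sqrt hn2
  rwa [Real.sqrt_sq (norm_nonneg _)] at this
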